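/- Every graph G with n vertices and minimum degree at least εn (ε > 0) admits an edge covering E = E₁ ∪ … ∪ E_ℓ with ℓ < ε⁻¹ such that each E_i has diameter at most 6. -/

import Mathlib

/-- The subgraph spanned by the edge set `E'` (on the vertices covered by `E'`)
has diameter at most `d`. -/
def EdgeSetDiamLE {V : Type*} (E' : Set (Sym2 V)) (d : ℕ) : Prop :=
  ∀ a b : V, a ∈ (SimpleGraph.fromEdgeSet E').support →
    b ∈ (SimpleGraph.fromEdgeSet E').support →
    (SimpleGraph.fromEdgeSet E').edist a b ≤ d

lemma aux_diam {V : Type*} (G : SimpleGraph V) (v : V) :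
    EdgeSetDiamLE {e | e ∈ G.edgeSet ∧ ∀ x ∈ e, G.edist x v ≤ 3} 6 := by
  set E' : Set (Sym2 V) := {e | e ∈ G.edgeSet ∧ ∀ x ∈ e, G.edist x v ≤ 3} with hE'
  set H := SimpleGraph.fromEdgeSet E' with hH
  have key : ∀ a : V, a ∈ H.support → H.edist a v ≤ 3 := by
    intro a ha
    obtain ⟨b, hab⟩ := (SimpleGraph.mem_support H).mp ha
    rw [hH, SimpleGraph.fromEdgeSet_adj] at hab
    have hmem : s(a, b) ∈ G.edgeSet ∧ ∀ x ∈ s(a, b), G.edist x v ≤ 3 := hab.1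
    have hav : G.edist a v ≤ 3 := hmem.2 a (Sym2.mem_mk_left a b)
    have hne : G.edist a v ≠ ⊤ := fun h => by simp [h] at hav
    obtain ⟨p, hp⟩ := SimpleGraph.exists_walk_of_edist_ne_top hne
    have hp3 : (p.length : ℕ∞) ≤ 3 := hp ▸ hav
    have hsup : ∀ x ∈ p.support, G.edist x v ≤ 3 := by
      intro x hx
      obtain ⟨q, r, hqr⟩ := SimpleGraph.Walk.mem_support_iff_exists_append.mp hx
      refine le_trans (SimpleGraph.edist_le r) (le_trans ?_ hp3)
      have : r.length ≤ p.length := by rw [hqr, SimpleGraph.Walk.length_append]; omega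
      exact_mod_cast this
    have hedges : ∀ e ∈ p.edges, e ∈ H.edgeSet := by
      intro e he
      have heG : e ∈ G.edgeSet := p.edges_subset_edgeSet he
      rw [hH, SimpleGraph.edgeSet_fromEdgeSet]
      refine ⟨⟨heG, ?_⟩, G.not_isDiag_of_mem_edgeSet heG⟩
      intro x hx
      apply hsup
      obtain ⟨⟨c, d⟩, rfl⟩ := e.exists_rep
      rcases Sym2.mem_iff.mp hx with rfl | rfl
      · exact p.fst_mem_support_of_mem_edges he
      · exact p.snd_mem_support_of_mem_edges he
    calc H.edist a v ≤ ((p.transfer H hedges).length : ℕ∞) := SimpleGraph.edist_le _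
      _ = (p.length : ℕ∞) := by rw [SimpleGraph.Walk.length_transfer]
      _ ≤ 3 := hp3
  intro a b ha hb
  have hkb := key b hb
  rw [SimpleGraph.edist_comm] at hkb
  calc H.edist a b ≤ H.edist a v + H.edist v b := SimpleGraph.edist_triangle
    _ ≤ 3 + 3 := add_le_add (key a ha) hkb
    _ ≤ 6 := by norm_num

/-- Every graph with n vertices and minimum degree at least εn admits
a covering of its edge set by ℓ < ε⁻¹ sets, each of diameter at most 6. -/
theorem stmt_15 {V : Type*} [Fintype V] (G : SimpleGraph V) (ε : ℝ) (hε : 0 < ε)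
    (n : ℕ) (hn : n = Fintype.card V)
    (hdeg : ∀ v : V, ε * n ≤ ((G.neighborSet v).ncard : ℝ)) :
    ∃ (l : ℕ) (E : Fin l → Set (Sym2 V)),
      (l : ℝ) < ε⁻¹ ∧ (⋃ i, E i) = G.edgeSet ∧ ∀ i, EdgeSetDiamLE (E i) 6 := by
  classical
  by_cases hV : Nonempty V
  case neg =>
    refine ⟨0, fun i => i.elim0, ?_, ?_, fun i => i.elim0⟩
    · simpa using inv_pos.mpr hε
    · rw [Set.iUnion_of_empty]
      ext e
      simp only [Set.mem_empty_iff_false, false_iff]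
      obtain ⟨⟨a, b⟩, rfl⟩ := e.exists_rep
      exact fun h => hV ⟨a⟩
  case pos =>
    obtain ⟨v₀⟩ := hV
    -- the property of being 2-independent
    set P : Finset V → Prop := fun S => ∀ u ∈ S, ∀ w ∈ S, u ≠ w → 2 < G.edist u w with hP
    have h𝒮 : (Finset.univ.powerset.filter P).Nonempty := by
      refine ⟨∅, ?_⟩
      simp [hP]
    obtain ⟨S, hSmem, hSmax⟩ :=
      Finset.exists_max_image (Finset.univ.powerset.filter P) Finset.card h𝒮
    have hPS : P S := (Finset.mem_filter.mp hSmem).2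
    have hmax : ∀ S', P S' → S'.card ≤ S.card := by
      intro S' hS'
      exact hSmax S' (Finset.mem_filter.mpr ⟨Finset.mem_powerset.mpr (Finset.subset_univ _), hS'⟩)
    -- maximality gives covering by balls of radius 2
    have hcov : ∀ x : V, ∃ v ∈ S, G.edist x v ≤ 2 := by
      intro x
      by_contra hc
      push_neg at hc
      have hxS : x ∉ S := fun hxS => by
        have := hc x hxS
        simp [SimpleGraph.edist_self] at this
      have hPx : P (insert x S) := by
        intro u hu w hw huw
        rcases Finset.mem_insert.mp hu with hux | huS
        · rcases Finset.mem_insert.mp hw with hwx | hwS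
          · exact absurd (hux.trans hwx.symm) huw
          · rw [hux]; exact hc w hwS
        · rcases Finset.mem_insert.mp hw with hwx | hwS
          · rw [hwx, SimpleGraph.edist_comm]; exact hc u huS
          · exact hPS u huS w hwS huw
      have := hmax _ hPx
      rw [Finset.card_insert_of_notMem hxS] at this
      omega
    -- S is nonempty
    have hS1 : 1 ≤ S.card := by
      have : P {v₀} := by
        intro u hu w hw huw
        simp only [Finset.mem_singleton] at hu hw
        exact absurd (hu.trans hw.symm) huw
      simpa using hmax _ this
    -- cardinality bound
    have hn0 : 0 < n := by rw [hn]; exact Fintype.card_pos_iff.mpr ⟨v₀⟩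
    have hdisj : (S : Set V).PairwiseDisjoint
        (fun v => insert v (G.neighborFinset v)) := by
      intro u hu w hw huw
      rw [Function.onFun, Finset.disjoint_left]
      intro x hxu hxw
      have hle : ∀ y : V, x ∈ insert y (G.neighborFinset y) → G.edist y x ≤ 1 := by
        intro y hy
        rcases Finset.mem_insert.mp hy with rfl | hy
        · simp [SimpleGraph.edist_self]
        · rw [SimpleGraph.mem_neighborFinset] at hy
          rw [SimpleGraph.edist_eq_one_iff_adj.mpr hy]
      have h2 : G.edist u w ≤ 2 := by
        calc G.edist u w ≤ G.edist u x + G.edist x w := SimpleGraph.edist_triangle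
          _ ≤ 1 + 1 := add_le_add (hle u hxu) (by rw [SimpleGraph.edist_comm]; exact hle w hxw)
          _ = 2 := by norm_num
      exact absurd h2 (not_le.mpr (hPS u hu w hw huw))
    have hsum : ∑ v ∈ S, (insert v (G.neighborFinset v)).card ≤ n := by
      calc ∑ v ∈ S, (insert v (G.neighborFinset v)).card
          = (S.biUnion fun v => insert v (G.neighborFinset v)).card :=
            (Finset.card_biUnion fun x hx y hy hxy => hdisj hx hy hxy).symm
        _ ≤ Fintype.card V := Finset.card_le_univ _
        _ = n := hn.symm
    have hcard : ∀ v : V, (insert v (G.neighborFinset v)).card = G.degree v + 1 := by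
      intro v
      rw [Finset.card_insert_of_notMem (G.notMem_neighborFinset_self v),
        SimpleGraph.card_neighborFinset_eq_degree]
    have hdeg' : ∀ v : V, ε * n ≤ (G.degree v : ℝ) := by
      intro v
      have := hdeg v
      rwa [Set.ncard_eq_toFinset_card', ← SimpleGraph.neighborFinset_def,
        SimpleGraph.card_neighborFinset_eq_degree] at this
    have hreal : (S.card : ℝ) * (ε * n) + S.card ≤ n := by
      have : (S.card : ℝ) * (ε * n + 1) ≤ ∑ v ∈ S, ((G.degree v : ℝ) + 1) := by
        rw [Finset.card_eq_sum_ones S]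
        push_cast
        rw [Finset.sum_mul, one_mul]
        exact Finset.sum_le_sum fun v _ => add_le_add_left (hdeg' v) 1
      have h2 : ∑ v ∈ S, ((G.degree v : ℝ) + 1) ≤ n := by
        have := hsum
        calc ∑ v ∈ S, ((G.degree v : ℝ) + 1)
            = ((∑ v ∈ S, (insert v (G.neighborFinset v)).card : ℕ) : ℝ) := by
              push_cast
              exact Finset.sum_congr rfl fun v _ => by rw [hcard v]; push_cast; ring
          _ ≤ n := by exact_mod_cast hsum
      nlinarith
    have hlt : (S.card : ℝ) < ε⁻¹ := by
      rw [inv_eq_one_div, lt_div_iff₀ hε]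
      have hS1' : (1 : ℝ) ≤ S.card := by exact_mod_cast hS1
      have hn0' : (0 : ℝ) < n := by exact_mod_cast hn0
      nlinarith
    -- indexing
    set l := S.card with hl
    have e : {x // x ∈ S} ≃ Fin l := Fintype.equivFinOfCardEq (Fintype.card_coe S)
    set f : Fin l → V := fun i => (e.symm i : V) with hf
    refine ⟨l, fun i => {e | e ∈ G.edgeSet ∧ ∀ x ∈ e, G.edist x (f i) ≤ 3}, hlt, ?_,
      fun i => aux_diam G (f i)⟩
    ext ed
    simp only [Set.mem_iUnion, Set.mem_setOf_eq]
    constructor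
    · rintro ⟨i, h, -⟩; exact h
    · intro hed
      obtain ⟨⟨u, w⟩, rfl⟩ := ed.exists_rep
      have hadj : G.Adj u w := hed
      obtain ⟨v, hvS, hv2⟩ := hcov w
      refine ⟨e ⟨v, hvS⟩, hed, ?_⟩
      have hfv : f (e ⟨v, hvS⟩) = v := by simp only [hf, Equiv.symm_apply_apply]
      rw [hfv]
      intro x hx
      have hw3 : G.edist w v ≤ 3 := le_trans hv2 (by norm_num)
      have hu3 : G.edist u v ≤ 3 := by
        calc G.edist u v ≤ G.edist u w + G.edist w v := SimpleGraph.edist_triangle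
          _ ≤ 1 + 2 := add_le_add (le_of_eq (SimpleGraph.edist_eq_one_iff_adj.mpr hadj)) hv2
          _ = 3 := by norm_num
      rcases Sym2.mem_iff.mp hx with rfl | rfl
      · exact hu3
      · exact hw3
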